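/- Let a>2 and b<0 be real numbers, and for x>0, y>0 with xy>1 define I(x,y) = y/(2(xy−1)) + (b²/8)x + ((a−2)²/8)y + ab/4. Then I(x,y) ≥ 0 for all (x,y) in this domain, and I(x,y) = 0 if and only if (x,y) = (−a/b, −b/(a−2)). -/

import Mathlib

/-- For `a > 2` and `b < 0`, the rate function
`I(x,y) = y/(2(xy-1)) + (b²/8)x + ((a-2)²/8)y + ab/4`, defined for `x > 0`, `y > 0`,
`xy > 1`, is nonnegative and vanishes exactly at `(x,y) = (-a/b, -b/(a-2))`. -/
theorem I_nonneg_vanishes (a b : ℝ) (ha : 2 < a) (hb : b < 0)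
    (I : ℝ → ℝ → ℝ)
    (hI : ∀ x y : ℝ, 0 < x → 0 < y → 1 < x * y →
      I x y = y/(2*(x*y - 1)) + (b^2/8)*x + ((a-2)^2/8)*y + a*b/4) :
    ∀ x y : ℝ, 0 < x → 0 < y → 1 < x * y →
      0 ≤ I x y ∧ (I x y = 0 ↔ (x = -a/b ∧ y = -b/(a-2))) := by
  intro x y hx hy hxy
  have ha2 : (0:ℝ) < a - 2 := by linarith
  have hb' : b ≠ 0 := ne_of_lt hb
  have hy' : y ≠ 0 := ne_of_gt hy
  have hxy1 : x * y - 1 ≠ 0 := by nlinarith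
  have hu : 0 < x - 1/y := by
    have : 1/y < x := by
      rw [div_lt_iff₀ hy]; linarith
    linarith
  have hu' : x - 1/y ≠ 0 := ne_of_gt hu
  have key : I x y = (2 + b*(x - 1/y))^2 / (8*(x - 1/y)) + (b + (a-2)*y)^2 / (8*y) := by
    rw [hI x y hx hy hxy]
    have e : x - 1/y = (x*y-1)/y := by rw [sub_div, mul_div_assoc, div_self hy', mul_one]
    rw [e]
    have hxy2 : y * x - 1 ≠ 0 := by rwa [mul_comm]
    field_simp
    ring
  have h1 : 0 ≤ (2 + b*(x - 1/y))^2 / (8*(x - 1/y)) :=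
    div_nonneg (sq_nonneg _) (by positivity)
  have h2 : 0 ≤ (b + (a-2)*y)^2 / (8*y) :=
    div_nonneg (sq_nonneg _) (by positivity)
  refine ⟨by rw [key]; positivity, ?_, ?_⟩
  · intro h0
    rw [key] at h0
    have e1 : (2 + b*(x - 1/y))^2 / (8*(x - 1/y)) = 0 := by linarith
    have e2 : (b + (a-2)*y)^2 / (8*y) = 0 := by linarith
    have n1 : 2 + b*(x - 1/y) = 0 := by
      have := (div_eq_zero_iff.mp e1).resolve_right (by positivity)
      exact pow_eq_zero_iff (n := 2) (by norm_num) |>.mp this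
    have n2 : b + (a-2)*y = 0 := by
      have := (div_eq_zero_iff.mp e2).resolve_right (by positivity)
      exact pow_eq_zero_iff (n := 2) (by norm_num) |>.mp this
    have hyv : y = -b/(a-2) := by
      field_simp
      linarith
    constructor
    · rw [hyv] at n1
      have h1y : (1:ℝ)/(-b/(a-2)) = -(a-2)/b := by
        rw [one_div, inv_div, div_neg, ← neg_div]
      rw [h1y] at n1
      field_simp at n1 ⊢
      nlinarith [n1]
    · exact hyv
  · rintro ⟨hxv, hyv⟩
    rw [key, hxv, hyv]
    have c1 : (a-2)*(-b/(a-2)) = -b := by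
      rw [mul_div_assoc', mul_comm, mul_div_assoc, div_self (ne_of_gt ha2), mul_one]
    have e2 : b + (a-2)*(-b/(a-2)) = 0 := by rw [c1]; ring
    have h1y : (1:ℝ)/(-b/(a-2)) = -(a-2)/b := by
      rw [one_div, inv_div, div_neg, ← neg_div]
    have e1 : 2 + b*(-a/b - 1/(-b/(a-2))) = 0 := by
      rw [h1y]
      field_simp
      ring
    rw [e1, e2]
    norm_num
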